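/- arXiv:1605.06349 — 4 statements merged into one kernel-verified Lean document; each statement's English description precedes it below -/
import Mathlib

section
/- Suppose Σ_{n≥1} E|Z_n − Z_{n−1}| < ∞. Then the randomized estimator Z̃ = (Z_N − Z_{N−1})/p_N is integrable and E[Z̃] = Σ_{n≥1} E[Z_n − Z_{n−1}] = lim_{n→∞} E[Z_n]. In other words, Z̃ is an unbiased estimator of the limit of the means of the Z_n. -/
open MeasureTheory Filter Topology

/-- The single-term randomized multilevel estimator `Z̃ = (Z_N − Z_{N−1}) / p_N`
is integrable and unbiased for `∑_{n≥1} E[Z n − Z (n−1)] = lim_n E[Z n]`,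
provided `∑_{n≥1} E|Z n − Z (n−1)| < ∞`. -/
theorem randomized_estimator_unbiased {Ω : Type*} [MeasurableSpace Ω] (P : Measure Ω)
    [IsProbabilityMeasure P] (Z : ℕ → Ω → ℝ) (N : Ω → ℕ) (p : ℕ → ℝ)
    (hZ0 : Z 0 = 0)
    (hint : ∀ n, Integrable (Z n) P)
    (hZmeas : ∀ n, Measurable (Z n))
    (hNmeas : Measurable N)
    (hN1 : ∀ ω, 1 ≤ N ω)
    (hp : ∀ n, p n = (P {ω | N ω = n}).toReal)
    (hppos : ∀ n, 1 ≤ n → 0 < p n)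
    (hindep : ProbabilityTheory.IndepFun N (fun ω => fun n => Z n ω) P)
    (hsum : Summable fun n : ℕ => ∫ ω, |Z (n + 1) ω - Z n ω| ∂P) :
    Integrable (fun ω => (Z (N ω) ω - Z (N ω - 1) ω) / p (N ω)) P ∧
      (∫ ω, (Z (N ω) ω - Z (N ω - 1) ω) / p (N ω) ∂P)
        = ∑' n : ℕ, ∫ ω, (Z (n + 1) ω - Z n ω) ∂P ∧
      Tendsto (fun n => ∫ ω, Z n ω ∂P) atTop
        (𝓝 (∫ ω, (Z (N ω) ω - Z (N ω - 1) ω) / p (N ω) ∂P)) := by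
  -- the increments
  set D : ℕ → Ω → ℝ := fun n ω => Z (n + 1) ω - Z n ω with hDdef
  have hDint : ∀ n, Integrable (D n) P := fun n => (hint (n + 1)).sub (hint n)
  have hDmeas : ∀ n, Measurable (D n) := fun n => (hZmeas (n + 1)).sub (hZmeas n)
  -- indicator of {N = m}
  set χ : ℕ → Ω → ℝ := fun m ω => if N ω = m then 1 else 0 with hχdef
  have hNset : ∀ m, MeasurableSet {ω | N ω = m} := fun m =>
    hNmeas (measurableSet_singleton m)
  have hχ_ind : ∀ m, χ m = Set.indicator {ω | N ω = m} (fun _ => (1 : ℝ)) := by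
    intro m; funext ω
    simp only [hχdef, Set.indicator_apply, Set.mem_setOf_eq]
  have hχint : ∀ m, Integrable (χ m) P := by
    intro m
    rw [hχ_ind m]
    exact (integrable_const (1 : ℝ)).indicator (hNset m)
  have hχint' : ∀ m, ∫ ω, χ m ω ∂P = p m := by
    intro m
    rw [hp m, ← measureReal_def, ← integral_indicator_one (hNset m)]
    congr 1
    funext ω
    simp only [hχdef, Set.indicator_apply, Set.mem_setOf_eq, Pi.one_apply]
  -- key independence computation
  have hkey : ∀ (m : ℕ) (φ : (ℕ → ℝ) → ℝ), Measurable φ →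
      Integrable (fun ω => φ (fun n => Z n ω)) P →
      Integrable (fun ω => χ m ω * φ (fun n => Z n ω)) P ∧
        ∫ ω, χ m ω * φ (fun n => Z n ω) ∂P
          = p m * ∫ ω, φ (fun n => Z n ω) ∂P := by
    intro m φ hφ hφint
    have hψ : Measurable (fun k : ℕ => if k = m then (1 : ℝ) else 0) :=
      measurable_of_countable _
    have hindep' : ProbabilityTheory.IndepFun (χ m)
        (fun ω => φ (fun n => Z n ω)) P := hindep.comp hψ hφ
    constructor
    · exact hindep'.integrable_mul (hχint m) hφint
    · have := hindep'.integral_fun_mul_eq_mul_integral (hχint m).1 hφint.1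
      rw [← hχint' m]
      exact this
  -- the summands
  set g : ℕ → Ω → ℝ := fun n ω => χ (n + 1) ω * D n ω / p (n + 1) with hgdef
  have hpne : ∀ n : ℕ, p (n + 1) ≠ 0 := fun n =>
    (hppos (n + 1) (Nat.le_add_left 1 n)).ne'
  -- g n integrable with integral ∫ D n
  have hφn : ∀ n : ℕ, Measurable (fun v : ℕ → ℝ => v (n + 1) - v n) := fun n =>
    (measurable_pi_apply (n + 1)).sub (measurable_pi_apply n)
  have hgkey := fun n : ℕ => hkey (n + 1) (fun v => v (n + 1) - v n) (hφn n) (hDint n)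
  have hgint : ∀ n, Integrable (g n) P := fun n => ((hgkey n).1).div_const _
  have hgintegral : ∀ n, ∫ ω, g n ω ∂P = ∫ ω, D n ω ∂P := by
    intro n
    simp only [hgdef, integral_div]
    rw [(hgkey n).2, mul_div_cancel_left₀ _ (hpne n)]
  -- norms of g
  have hgnorm : ∀ n ω, ‖g n ω‖ = χ (n + 1) ω * |D n ω| / p (n + 1) := by
    intro n ω
    simp only [hgdef, hχdef]
    by_cases h : N ω = n + 1 <;>
      simp [h, abs_div, abs_of_pos (hppos (n + 1) (Nat.le_add_left 1 n)), abs_mul,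
        Real.norm_eq_abs]
  have hφabs : ∀ n : ℕ, Measurable (fun v : ℕ → ℝ => |v (n + 1) - v n|) := fun n =>
    (hφn n).abs
  have habskey := fun n : ℕ =>
    hkey (n + 1) (fun v => |v (n + 1) - v n|) (hφabs n) (hDint n).abs
  have hgnormint : ∀ n, ∫ ω, ‖g n ω‖ ∂P = ∫ ω, |D n ω| ∂P := by
    intro n
    calc ∫ ω, ‖g n ω‖ ∂P = ∫ ω, χ (n + 1) ω * |D n ω| / p (n + 1) ∂P := by
          simp only [hgnorm]
      _ = (∫ ω, χ (n + 1) ω * |D n ω| ∂P) / p (n + 1) := integral_div _ _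
      _ = ∫ ω, |D n ω| ∂P := by
          rw [(habskey n).2, mul_div_cancel_left₀ _ (hpne n)]
  have hgsum : Summable fun n => ∫ ω, ‖g n ω‖ ∂P := by
    simpa only [hgnormint] using hsum
  -- the estimator equals g (N ω - 1) ω and the tsum of g
  have hfg : ∀ ω, (Z (N ω) ω - Z (N ω - 1) ω) / p (N ω) = g (N ω - 1) ω := by
    intro ω
    have h1 : N ω - 1 + 1 = N ω := Nat.succ_pred_eq_of_pos (hN1 ω)
    simp only [hgdef, hχdef, hDdef, h1]
    simp
  have hgzero : ∀ ω n, n ≠ N ω - 1 → g n ω = 0 := by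
    intro ω n hn
    have : N ω ≠ n + 1 := by
      intro h
      exact hn (by omega)
    simp only [hgdef, hχdef, if_neg this, zero_mul, zero_div]
  have hftsum : ∀ ω, (Z (N ω) ω - Z (N ω - 1) ω) / p (N ω) = ∑' n, g n ω := by
    intro ω
    rw [hfg ω, tsum_eq_single (N ω - 1) (fun n hn => hgzero ω n hn)]
  -- measurability of the estimator
  have hZN : Measurable fun ω => Z (N ω) ω := by
    have h1 : Measurable fun q : Ω × ℕ => Z q.2 q.1 :=
      measurable_from_prod_countable_left fun n => hZmeas n
    exact h1.comp (measurable_id.prodMk hNmeas)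
  have hZN1 : Measurable fun ω => Z (N ω - 1) ω := by
    have h1 : Measurable fun q : Ω × ℕ => Z q.2 q.1 :=
      measurable_from_prod_countable_left fun n => hZmeas n
    exact h1.comp (measurable_id.prodMk
      ((measurable_of_countable (fun k : ℕ => k - 1)).comp hNmeas))
  have hpN : Measurable fun ω => p (N ω) := (measurable_of_countable p).comp hNmeas
  have hfmeas : Measurable fun ω => (Z (N ω) ω - Z (N ω - 1) ω) / p (N ω) :=
    (hZN.sub hZN1).div hpN
  -- integrability of the estimator
  have hlin : ∀ n, ∫⁻ ω, ‖g n ω‖₊ ∂P = ENNReal.ofReal (∫ ω, ‖g n ω‖ ∂P) :=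
    fun n => (ofReal_integral_norm_eq_lintegral_enorm (hgint n)).symm
  have hlinsum : (∑' n, ∫⁻ ω, ‖g n ω‖₊ ∂P) ≠ ⊤ := by
    simp only [hlin]
    rw [← ENNReal.ofReal_tsum_of_nonneg
      (fun n => integral_nonneg fun ω => norm_nonneg _) hgsum]
    exact ENNReal.ofReal_ne_top
  have hfint : Integrable (fun ω => (Z (N ω) ω - Z (N ω - 1) ω) / p (N ω)) P := by
    refine ⟨hfmeas.aestronglyMeasurable, ?_⟩
    show (∫⁻ ω, (‖(Z (N ω) ω - Z (N ω - 1) ω) / p (N ω)‖₊ : ENNReal) ∂P) < ⊤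
    calc ∫⁻ ω, ‖(Z (N ω) ω - Z (N ω - 1) ω) / p (N ω)‖₊ ∂P
        = ∫⁻ ω, ∑' n, (‖g n ω‖₊ : ENNReal) ∂P := by
          apply lintegral_congr
          intro ω
          rw [hfg ω, tsum_eq_single (N ω - 1)
            (fun n hn => by simp [hgzero ω n hn])]
      _ = ∑' n, ∫⁻ ω, ‖g n ω‖₊ ∂P :=
          lintegral_tsum fun n => (hgint n).1.enorm
      _ < ⊤ := hlinsum.lt_top
  -- the integral identity
  have hIeq : (∫ ω, (Z (N ω) ω - Z (N ω - 1) ω) / p (N ω) ∂P)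
      = ∑' n : ℕ, ∫ ω, D n ω ∂P := by
    have h1 : ∑' n, (∫ ω, g n ω ∂P) = ∫ ω, ∑' n, g n ω ∂P :=
      integral_tsum_of_summable_integral_norm hgint hgsum
    calc (∫ ω, (Z (N ω) ω - Z (N ω - 1) ω) / p (N ω) ∂P)
        = ∫ ω, ∑' n, g n ω ∂P := integral_congr_ae (.of_forall hftsum)
      _ = ∑' n, ∫ ω, g n ω ∂P := h1.symm
      _ = ∑' n, ∫ ω, D n ω ∂P := by simp only [hgintegral]
  refine ⟨hfint, hIeq, ?_⟩
  -- the limit of means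
  have hDsumm : Summable fun n => ∫ ω, D n ω ∂P := by
    refine hsum.of_norm_bounded fun n => ?_
    calc ‖∫ ω, D n ω ∂P‖ ≤ ∫ ω, ‖D n ω‖ ∂P := norm_integral_le_integral_norm _
      _ = ∫ ω, |Z (n + 1) ω - Z n ω| ∂P := by simp [hDdef, Real.norm_eq_abs]
  have htel : ∀ n, ∫ ω, Z n ω ∂P = ∑ k ∈ Finset.range n, ∫ ω, D k ω ∂P := by
    intro n
    induction n with
    | zero => simp [hZ0]
    | succ n ih =>
      rw [Finset.sum_range_succ, ← ih]
      have : ∫ ω, D n ω ∂P = (∫ ω, Z (n + 1) ω ∂P) - ∫ ω, Z n ω ∂P :=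
        integral_sub (hint (n + 1)) (hint n)
      rw [this]; ring
  rw [hIeq]
  have := hDsumm.hasSum.tendsto_sum_nat
  refine this.congr fun n => (htel n).symm
end

section
/- The second moment of the randomized estimator satisfies the identity E[Z̃²] = Σ_{n≥1} E[(Z_n − Z_{n−1})²]/p_n, where both sides are understood as values in [0, ∞] (the identity holds whether or not the two sides are finite). -/
open MeasureTheory Filter Topology

/-- Second-moment identity for the randomized multilevel estimator:
`E[Z̃²] = ∑_{n≥1} E[(Z n − Z (n−1))²] / p n`, as an identity in `[0, ∞]`. -/
theorem randomized_estimator_second_moment {Ω : Type*} [MeasurableSpace Ω] (P : Measure Ω)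
    [IsProbabilityMeasure P] (Z : ℕ → Ω → ℝ) (N : Ω → ℕ) (p : ℕ → ℝ)
    (hZ0 : Z 0 = 0)
    (hint : ∀ n, Integrable (Z n) P)
    (hZmeas : ∀ n, Measurable (Z n))
    (hNmeas : Measurable N)
    (hN1 : ∀ ω, 1 ≤ N ω)
    (hp : ∀ n, p n = (P {ω | N ω = n}).toReal)
    (hppos : ∀ n, 1 ≤ n → 0 < p n)
    (hindep : ProbabilityTheory.IndepFun N (fun ω => fun n => Z n ω) P) :
    (∫⁻ ω, ENNReal.ofReal (((Z (N ω) ω - Z (N ω - 1) ω) / p (N ω)) ^ 2) ∂P)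
      = ∑' n : ℕ,
          (∫⁻ ω, ENNReal.ofReal ((Z (n + 1) ω - Z n ω) ^ 2) ∂P)
            / P {ω | N ω = n + 1} := by
  classical
  set s : ℕ → Set Ω := fun n => N ⁻¹' {n + 1} with hs_def
  have hs_meas : ∀ n, MeasurableSet (s n) := fun n => hNmeas (measurableSet_singleton _)
  have hs_disj : Pairwise (Function.onFun Disjoint s) := by
    intro m n hmn
    simp only [Function.onFun, hs_def, Set.disjoint_left]
    intro ω hm hn
    simp only [Set.mem_preimage, Set.mem_singleton_iff] at hm hn
    exact hmn (by omega)
  have hs_union : (⋃ n, s n) = Set.univ := by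
    ext ω
    simp only [Set.mem_iUnion, hs_def, Set.mem_preimage, Set.mem_singleton_iff,
      Set.mem_univ, iff_true]
    exact ⟨N ω - 1, by have := hN1 ω; omega⟩
  -- measurability of the integrand
  have hZuncurry : Measurable fun q : Ω × ℕ => Z q.2 q.1 :=
    measurable_from_prod_countable_left fun n => hZmeas n
  have hmeas_f : Measurable fun ω =>
      ENNReal.ofReal (((Z (N ω) ω - Z (N ω - 1) ω) / p (N ω)) ^ 2) := by
    apply ENNReal.measurable_ofReal.comp
    apply Measurable.pow_const
    apply Measurable.div
    · exact (hZuncurry.comp (measurable_id.prodMk hNmeas)).sub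
        (hZuncurry.comp (measurable_id.prodMk ((measurable_id.sub_const 1).comp hNmeas)))
    · exact (measurable_of_countable p).comp hNmeas
  -- decompose the integral over the partition
  have hdecomp : (∫⁻ ω, ENNReal.ofReal (((Z (N ω) ω - Z (N ω - 1) ω) / p (N ω)) ^ 2) ∂P)
      = ∑' n : ℕ, ∫⁻ ω in s n,
          ENNReal.ofReal (((Z (N ω) ω - Z (N ω - 1) ω) / p (N ω)) ^ 2) ∂P := by
    rw [← lintegral_iUnion hs_meas hs_disj, hs_union, Measure.restrict_univ]
  rw [hdecomp]
  congr 1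
  funext n
  set q : ENNReal := P {ω | N ω = n + 1} with hq_def
  have hsq : s n = {ω | N ω = n + 1} := rfl
  have hq_ne_top : q ≠ ⊤ := measure_ne_top P _
  have hpn : p (n + 1) = q.toReal := hp (n + 1)
  have hppos' : 0 < p (n + 1) := hppos (n + 1) (by omega)
  have hq_ne_zero : q ≠ 0 := by
    intro h
    rw [hpn, h] at hppos'
    simp at hppos'
  -- on s n, the integrand simplifies
  have hcongr : (∫⁻ ω in s n,
      ENNReal.ofReal (((Z (N ω) ω - Z (N ω - 1) ω) / p (N ω)) ^ 2) ∂P)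
      = ∫⁻ ω in s n,
          (ENNReal.ofReal ((Z (n + 1) ω - Z n ω) ^ 2)
            * ENNReal.ofReal ((p (n + 1) ^ 2)⁻¹)) ∂P := by
    apply setLIntegral_congr_fun (hs_meas n)
    intro ω hω
    dsimp only
    have hNω : N ω = n + 1 := hω
    rw [hNω]
    simp only [Nat.add_sub_cancel]
    rw [div_pow, div_eq_mul_inv, ENNReal.ofReal_mul (sq_nonneg _)]
  rw [hcongr]
  rw [lintegral_mul_const _ (show Measurable fun ω => ENNReal.ofReal ((Z (n + 1) ω - Z n ω) ^ 2) from (((hZmeas (n + 1)).sub (hZmeas n)).pow_const 2).ennreal_ofReal)]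
  -- independence: ∫ over s n of the square = q * ∫ of the square
  have hkey : (∫⁻ ω in s n, ENNReal.ofReal ((Z (n + 1) ω - Z n ω) ^ 2) ∂P)
      = q * ∫⁻ ω, ENNReal.ofReal ((Z (n + 1) ω - Z n ω) ^ 2) ∂P := by
    set u : Ω → ENNReal := fun ω => if N ω = n + 1 then 1 else 0 with hu_def
    set v : Ω → ENNReal := fun ω => ENNReal.ofReal ((Z (n + 1) ω - Z n ω) ^ 2) with hv_def
    have hu_meas : Measurable u :=
      (measurable_of_countable (fun k : ℕ => if k = n + 1 then (1 : ENNReal) else 0)).comp hNmeas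
    have hv_meas : Measurable v :=
      (((hZmeas (n + 1)).sub (hZmeas n)).pow_const 2).ennreal_ofReal
    have hindep' : ProbabilityTheory.IndepFun u v P := by
      apply hindep.comp (φ := fun k : ℕ => if k = n + 1 then (1 : ENNReal) else 0)
        (ψ := fun x : ℕ → ℝ => ENNReal.ofReal ((x (n + 1) - x n) ^ 2))
      · exact measurable_of_countable _
      · exact ENNReal.measurable_ofReal.comp
          (((measurable_pi_apply (n + 1)).sub (measurable_pi_apply n)).pow_const 2)
    have huv : ∀ ω, u ω * v ω = (s n).indicator v ω := by
      intro ω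
      by_cases h : N ω = n + 1
      · simp [hu_def, h, Set.indicator_of_mem, hsq, Set.mem_setOf_eq,
          show ω ∈ s n from h]
      · simp [hu_def, h, Set.indicator_of_notMem, show ω ∉ s n from h]
    calc (∫⁻ ω in s n, v ω ∂P) = ∫⁻ ω, (s n).indicator v ω ∂P := by
          rw [lintegral_indicator (hs_meas n)]
      _ = ∫⁻ ω, u ω * v ω ∂P := by simp_rw [huv]
      _ = (∫⁻ ω, u ω ∂P) * ∫⁻ ω, v ω ∂P :=
          ProbabilityTheory.lintegral_mul_eq_lintegral_mul_lintegral_of_indepFun''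
            hu_meas.aemeasurable hv_meas.aemeasurable hindep'
      _ = q * ∫⁻ ω, v ω ∂P := by
          congr 1
          rw [hu_def]
          simp_rw [show ∀ ω, (if N ω = n + 1 then (1:ENNReal) else 0)
            = (s n).indicator (fun _ => (1:ENNReal)) ω from fun ω => by
              by_cases h : N ω = n + 1 <;>
                simp [h, show (ω ∈ s n) ↔ N ω = n + 1 from Iff.rfl]]
          rw [lintegral_indicator (hs_meas n)]
          simp [hsq, hq_def]
  rw [hkey]
  -- now pure ENNReal arithmetic
  have hofReal : ENNReal.ofReal ((p (n + 1) ^ 2)⁻¹) = (q * q)⁻¹ := by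
    rw [show q = ENNReal.ofReal (p (n + 1)) from by
        rw [hpn, ENNReal.ofReal_toReal hq_ne_top],
      ← ENNReal.ofReal_mul hppos'.le,
      ← ENNReal.ofReal_inv_of_pos (mul_pos hppos' hppos'), sq]
  rw [hofReal, ENNReal.mul_inv (Or.inl hq_ne_zero) (Or.inl hq_ne_top), ENNReal.div_eq_inv_mul]
  rw [mul_comm q _, mul_assoc, ← mul_assoc q, ENNReal.mul_inv_cancel hq_ne_zero hq_ne_top,
    one_mul, mul_comm]
end

section
/- Suppose each Z_n is square integrable and Σ_{n≥1} E[(Z_n − Z_{n−1})²]/p_n < ∞. Then Z̃ is square integrable, Z̃ is integrable, the series Σ_{n≥1} E[Z_n − Z_{n−1}] converges absolutely, and E[Z̃] = Σ_{n≥1} E[Z_n − Z_{n−1}] = lim_{n→∞} E[Z_n]. Hence Z̃ is an unbiased estimator of lim_{n→∞} E[Z_n] with finite variance. -/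
open MeasureTheory Filter Topology

/-- If each `Z n` is square integrable and `∑_{n≥1} E[(Z n − Z (n−1))²]/p n < ∞`, then
the randomized estimator `Z̃ = (Z_N − Z_{N−1})/p_N` is square integrable (hence of finite
variance), integrable, the series `∑_{n≥1} E[Z n − Z (n−1)]` converges absolutely, and
`E[Z̃] = ∑_{n≥1} E[Z n − Z (n−1)] = lim_n E[Z n]`. -/
theorem randomized_estimator_finite_variance_unbiased {Ω : Type*} [MeasurableSpace Ω]
    (P : Measure Ω) [IsProbabilityMeasure P] (Z : ℕ → Ω → ℝ) (N : Ω → ℕ) (p : ℕ → ℝ)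
    (hZ0 : Z 0 = 0)
    (hZmeas : ∀ n, Measurable (Z n))
    (hL2 : ∀ n, MemLp (Z n) 2 P)
    (hNmeas : Measurable N)
    (hN1 : ∀ ω, 1 ≤ N ω)
    (hp : ∀ n, p n = (P {ω | N ω = n}).toReal)
    (hppos : ∀ n, 1 ≤ n → 0 < p n)
    (hindep : ProbabilityTheory.IndepFun N (fun ω => fun n => Z n ω) P)
    (hsum : Summable fun n : ℕ => (∫ ω, (Z (n + 1) ω - Z n ω) ^ 2 ∂P) / p (n + 1)) :
    MemLp (fun ω => (Z (N ω) ω - Z (N ω - 1) ω) / p (N ω)) 2 P ∧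
      Integrable (fun ω => (Z (N ω) ω - Z (N ω - 1) ω) / p (N ω)) P ∧
      (Summable fun n : ℕ => |∫ ω, (Z (n + 1) ω - Z n ω) ∂P|) ∧
      (∫ ω, (Z (N ω) ω - Z (N ω - 1) ω) / p (N ω) ∂P)
        = ∑' n : ℕ, ∫ ω, (Z (n + 1) ω - Z n ω) ∂P ∧
      Tendsto (fun n => ∫ ω, Z n ω ∂P) atTop
        (𝓝 (∫ ω, (Z (N ω) ω - Z (N ω - 1) ω) / p (N ω) ∂P)) := by
  classical
  set Y : Ω → ℝ := fun ω => (Z (N ω) ω - Z (N ω - 1) ω) / p (N ω) with hYdef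
  set D : ℕ → Ω → ℝ := fun n ω => Z (n + 1) ω - Z n ω with hDdef
  set q : ℕ → ℝ := fun n => p (n + 1) with hqdef
  set a : ℕ → ℝ := fun n => ∫ ω, (D n ω) ^ 2 ∂P with hadef
  set s : ℕ → Set Ω := fun n => {ω | N ω = n + 1} with hsdef
  set W : Ω → ℕ → ℝ := fun ω k => Z k ω with hWdef
  have hsmeas : ∀ n, MeasurableSet (s n) := fun n =>
    hNmeas (measurableSet_singleton (n + 1))
  have hdisj : Pairwise (Function.onFun Disjoint s) := by
    intro m n hmn
    simp only [Function.onFun, Set.disjoint_left]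
    intro ω hm hn
    simp only [hsdef, Set.mem_setOf_eq] at hm hn
    exact hmn (by omega : m = n)
  have hU : (⋃ n, s n) = Set.univ := by
    ext ω
    simp only [Set.mem_iUnion, Set.mem_univ, iff_true, hsdef, Set.mem_setOf_eq]
    exact ⟨N ω - 1, by have := hN1 ω; omega⟩
  have hq : ∀ n, q n = (P (s n)).toReal := fun n => hp (n + 1)
  have hqpos : ∀ n, 0 < q n := fun n => hppos (n + 1) (by omega)
  have hqsum : Summable q := by
    have h := summable_measure_toReal (μ := P) hsmeas hdisj
    have : (fun n => P.real (s n)) = q := by ext n; rw [hq n, measureReal_def]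
    rwa [this] at h
  have hDmeas : ∀ n, Measurable (D n) := fun n => (hZmeas (n + 1)).sub (hZmeas n)
  have hDL2 : ∀ n, MemLp (D n) 2 P := fun n => (hL2 (n + 1)).sub (hL2 n)
  have hDint : ∀ n, Integrable (D n) P := fun n => (hDL2 n).integrable one_le_two
  have hD2int : ∀ n, Integrable (fun ω => (D n ω) ^ 2) P := fun n => (hDL2 n).integrable_sq
  have ha_nonneg : ∀ n, 0 ≤ a n := fun n => integral_nonneg fun ω => sq_nonneg _
  have hWmeas : Measurable W := measurable_pi_lambda _ fun k => hZmeas k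
  -- measurability of Y
  have hYmeas : Measurable Y := by
    have hg : Measurable (fun x : (ℕ → ℝ) × ℕ => (x.1 x.2 - x.1 (x.2 - 1)) / p x.2) := by
      apply measurable_from_prod_countable_left
      intro k
      show Measurable fun w : ℕ → ℝ => (w k - w (k - 1)) / p k
      have h1 : Measurable fun w : ℕ → ℝ => w k := measurable_pi_apply k
      have h2 : Measurable fun w : ℕ → ℝ => w (k - 1) := measurable_pi_apply (k - 1)
      exact (h1.sub h2).div_const (p k)
    exact hg.comp (hWmeas.prodMk hNmeas)
  -- key independence identity, real version
  have key : ∀ (n : ℕ) (f : (ℕ → ℝ) → ℝ), Measurable f →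
      ∫ ω, (if N ω = n + 1 then (1 : ℝ) else 0) * f (W ω) ∂P
        = q n * ∫ ω, f (W ω) ∂P := by
    intro n f hf
    have hφ : Measurable (fun k : ℕ => if k = n + 1 then (1 : ℝ) else 0) :=
      Measurable.of_discrete
    have hind : ProbabilityTheory.IndepFun
        (fun ω => if N ω = n + 1 then (1 : ℝ) else 0) (fun ω => f (W ω)) P :=
      hindep.comp hφ hf
    rw [hind.integral_fun_mul_eq_mul_integral (hφ.comp hNmeas).aestronglyMeasurable
      (hf.comp hWmeas).aestronglyMeasurable]
    congr 1
    have heq : (fun ω => if N ω = n + 1 then (1 : ℝ) else 0)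
        = (s n).indicator (fun _ => (1 : ℝ)) := by
      ext ω
      by_cases h : N ω = n + 1 <;> simp [Set.indicator, hsdef, h]
    rw [heq, integral_indicator_const (1 : ℝ) (hsmeas n), hq n]
    simp [measureReal_def]
  -- key independence identity, lintegral version
  have lkey : ∀ (n : ℕ) (f : (ℕ → ℝ) → ENNReal), Measurable f →
      ∫⁻ ω, (if N ω = n + 1 then (1 : ENNReal) else 0) * f (W ω) ∂P
        = P (s n) * ∫⁻ ω, f (W ω) ∂P := by
    intro n f hf
    have hφ : Measurable (fun k : ℕ => if k = n + 1 then (1 : ENNReal) else 0) :=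
      Measurable.of_discrete
    have hind : ProbabilityTheory.IndepFun
        (fun ω => if N ω = n + 1 then (1 : ENNReal) else 0) (fun ω => f (W ω)) P :=
      hindep.comp hφ hf
    have hφN : AEMeasurable (fun ω => if N ω = n + 1 then (1 : ENNReal) else 0) P := by
      exact (hφ.comp hNmeas).aemeasurable
    have hfW : AEMeasurable (fun ω => f (W ω)) P := by
      exact (hf.comp hWmeas).aemeasurable
    rw [ProbabilityTheory.lintegral_mul_eq_lintegral_mul_lintegral_of_indepFun'' hφN hfW hind]
    congr 1
    have heq : (fun ω => if N ω = n + 1 then (1 : ENNReal) else 0)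
        = (s n).indicator (1 : Ω → ENNReal) := by
      ext ω
      by_cases h : N ω = n + 1 <;> simp [Set.indicator, hsdef, h]
    rw [heq, lintegral_indicator_one (hsmeas n)]
  -- second moment computation
  have hY2 : MemLp Y 2 P := by
    rw [memLp_two_iff_integrable_sq hYmeas.aestronglyMeasurable]
    refine ⟨(hYmeas.pow_const 2).aestronglyMeasurable, ?_⟩
    rw [HasFiniteIntegral]
    have step1 : ∫⁻ ω, ‖Y ω ^ 2‖ₑ ∂P = ∑' n, ∫⁻ ω in s n, ENNReal.ofReal (Y ω ^ 2) ∂P := by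
      have hnorm : ∀ ω, (‖Y ω ^ 2‖ₑ : ENNReal) = ENNReal.ofReal (Y ω ^ 2) := fun ω =>
        Real.enorm_eq_ofReal (sq_nonneg _)
      simp_rw [hnorm]
      rw [← setLIntegral_univ, ← hU, lintegral_iUnion hsmeas hdisj]
    have step2 : ∀ n, ∫⁻ ω in s n, ENNReal.ofReal (Y ω ^ 2) ∂P
        = ENNReal.ofReal (a n / q n) := by
      intro n
      set f : (ℕ → ℝ) → ENNReal :=
        fun w => ENNReal.ofReal (((w (n + 1) - w n) / q n) ^ 2) with hfdef
      have h1 : Measurable fun w : ℕ → ℝ => w (n + 1) := measurable_pi_apply (n + 1)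
      have h2 : Measurable fun w : ℕ → ℝ => w n := measurable_pi_apply n
      have hfmeas : Measurable f :=
        ENNReal.measurable_ofReal.comp (((h1.sub h2).div_const (q n)).pow_const 2)
      have hcong : ∫⁻ ω in s n, ENNReal.ofReal (Y ω ^ 2) ∂P
          = ∫⁻ ω in s n, (if N ω = n + 1 then (1 : ENNReal) else 0) * f (W ω) ∂P := by
        refine setLIntegral_congr_fun (hsmeas n) ?_
        intro ω hω
        have hNω : N ω = n + 1 := hω
        simp only [hYdef, hfdef, hWdef, hNω, if_pos rfl, one_mul]
        norm_num
        rfl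
      have hle : ∫⁻ ω in s n, (if N ω = n + 1 then (1 : ENNReal) else 0) * f (W ω) ∂P
          = ∫⁻ ω, (if N ω = n + 1 then (1 : ENNReal) else 0) * f (W ω) ∂P := by
        rw [← lintegral_indicator (hsmeas n)]
        congr 1
        ext ω
        by_cases h : N ω = n + 1 <;> simp [Set.indicator, hsdef, h]
      rw [hcong, hle, lkey n f hfmeas]
      have hfi : Integrable (fun ω => ((D n ω) / q n) ^ 2) P := by
        have := (hD2int n).div_const ((q n) ^ 2)
        simpa [div_pow] using this
      have hfint : ∫⁻ ω, f (W ω) ∂P = ENNReal.ofReal (a n / q n ^ 2) := by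
        have h1 : ∫⁻ ω, f (W ω) ∂P
            = ∫⁻ ω, ENNReal.ofReal (((D n ω) / q n) ^ 2) ∂P := by
          congr 1
        rw [h1, ← ofReal_integral_eq_lintegral_ofReal hfi
          (Filter.Eventually.of_forall fun ω => sq_nonneg _)]
        congr 1
        simp_rw [div_pow]
        rw [integral_div]
      rw [hfint]
      have hPs : P (s n) = ENNReal.ofReal (q n) := by
        rw [hq n, ENNReal.ofReal_toReal (measure_ne_top P _)]
      rw [hPs, ← ENNReal.ofReal_mul (le_of_lt (hqpos n))]
      congr 1
      have hq0 : q n ≠ 0 := ne_of_gt (hqpos n)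
      rw [pow_two, ← div_div, ← mul_div_assoc, mul_comm (q n), mul_div_assoc,
        div_self hq0, mul_one]
    simp_rw [step1, step2]
    rw [← ENNReal.ofReal_tsum_of_nonneg
      (fun n => div_nonneg (ha_nonneg n) (le_of_lt (hqpos n))) hsum]
    exact ENNReal.ofReal_lt_top
  have hYint : Integrable Y P := hY2.integrable one_le_two
  -- the value of each piece of the integral of Y
  have hpiece : ∀ n, ∫ ω in s n, Y ω ∂P = ∫ ω, D n ω ∂P := by
    intro n
    have hcong : ∫ ω in s n, Y ω ∂P = ∫ ω in s n,
        (if N ω = n + 1 then (1 : ℝ) else 0) * ((W ω (n + 1) - W ω n) / q n) ∂P := by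
      refine setIntegral_congr_fun (hsmeas n) ?_
      intro ω hω
      have hNω : N ω = n + 1 := hω
      simp only [hYdef, hWdef, hNω, if_pos rfl, one_mul]
      norm_num
      rfl
    have hfull : ∫ ω in s n,
        (if N ω = n + 1 then (1 : ℝ) else 0) * ((W ω (n + 1) - W ω n) / q n) ∂P
        = ∫ ω, (if N ω = n + 1 then (1 : ℝ) else 0) * ((W ω (n + 1) - W ω n) / q n) ∂P := by
      rw [← integral_indicator (hsmeas n)]
      congr 1
      ext ω
      by_cases h : N ω = n + 1 <;> simp [Set.indicator, hsdef, h]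
    have h1 : Measurable fun w : ℕ → ℝ => w (n + 1) := measurable_pi_apply (n + 1)
    have h2 : Measurable fun w : ℕ → ℝ => w n := measurable_pi_apply n
    have hfmeas : Measurable (fun w : ℕ → ℝ => (w (n + 1) - w n) / q n) :=
      (h1.sub h2).div_const _
    rw [hcong, hfull, key n _ hfmeas]
    have : ∫ ω, (W ω (n + 1) - W ω n) / q n ∂P = (∫ ω, D n ω ∂P) / q n := by
      simp only [hWdef, hDdef]
      rw [integral_div]
    rw [this, mul_div_cancel₀ _ (ne_of_gt (hqpos n))]
  -- E[Y] = ∑ E[D n]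
  have hEY : ∫ ω, Y ω ∂P = ∑' n, ∫ ω, D n ω ∂P := by
    have h1 : ∫ ω, Y ω ∂P = ∫ ω in ⋃ n, s n, Y ω ∂P := by rw [hU, setIntegral_univ]
    rw [h1, integral_iUnion hsmeas hdisj (hU ▸ hYint.integrableOn)]
    exact tsum_congr hpiece
  -- Cauchy–Schwarz: |E[D n]|² ≤ a n
  have hCS : ∀ n, |∫ ω, D n ω ∂P| ≤ Real.sqrt (a n) := by
    intro n
    have hvar := ProbabilityTheory.variance_nonneg (D n) P
    rw [ProbabilityTheory.variance_eq_sub (hDL2 n)] at hvar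
    have hsq : (∫ ω, D n ω ∂P) ^ 2 ≤ a n := by
      have : ∫ ω, (D n ω) ^ 2 ∂P = a n := rfl
      simpa [Pi.pow_apply] using sub_nonneg.mp hvar
    calc |∫ ω, D n ω ∂P| = Real.sqrt ((∫ ω, D n ω ∂P) ^ 2) := (Real.sqrt_sq_eq_abs _).symm
      _ ≤ Real.sqrt (a n) := Real.sqrt_le_sqrt hsq
  have amgm : ∀ x y : ℝ, 0 ≤ x → 0 ≤ y → Real.sqrt (x * y) ≤ (x + y) / 2 := by
    intro x y hx hy
    rw [Real.sqrt_mul hx]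
    nlinarith [sq_nonneg (Real.sqrt x - Real.sqrt y), Real.sq_sqrt hx, Real.sq_sqrt hy]
  have habs : Summable fun n => |∫ ω, D n ω ∂P| := by
    refine Summable.of_nonneg_of_le (fun n => abs_nonneg _)
      (fun n => ?_) (((hsum.add hqsum).div_const 2))
    refine (hCS n).trans ?_
    show Real.sqrt (a n) ≤ (a n / q n + q n) / 2
    have h1 : a n = (a n / q n) * q n := (div_mul_cancel₀ _ (ne_of_gt (hqpos n))).symm
    calc Real.sqrt (a n) = Real.sqrt ((a n / q n) * q n) := by rw [← h1]
      _ ≤ (a n / q n + q n) / 2 :=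
        amgm _ _ (div_nonneg (ha_nonneg n) (le_of_lt (hqpos n))) (le_of_lt (hqpos n))
  -- telescoping sums
  have hsum' : Summable fun n => ∫ ω, D n ω ∂P := habs.of_abs
  have htel : ∀ n, ∑ i ∈ Finset.range n, ∫ ω, D i ω ∂P = ∫ ω, Z n ω ∂P := by
    intro n
    have h1 : ∀ i, ∫ ω, D i ω ∂P = (∫ ω, Z (i + 1) ω ∂P) - ∫ ω, Z i ω ∂P := by
      intro i
      exact integral_sub ((hL2 (i + 1)).integrable one_le_two)
        ((hL2 i).integrable one_le_two)
    simp_rw [h1]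
    rw [Finset.sum_range_sub (fun i => ∫ ω, Z i ω ∂P)]
    simp [hZ0]
  have htend : Tendsto (fun n => ∫ ω, Z n ω ∂P) atTop (𝓝 (∫ ω, Y ω ∂P)) := by
    have h := hsum'.hasSum.tendsto_sum_nat
    rw [← hEY] at h
    have heq : (fun n => ∑ i ∈ Finset.range n, ∫ ω, D i ω ∂P)
        = fun n => ∫ ω, Z n ω ∂P := funext htel
    rwa [heq] at h
  exact ⟨hY2, hYint, habs, hEY, htend⟩
end

section
/- Let d ≥ 2 be an integer. There exists no sequence (p_n)_{n≥1} of strictly positive real numbers such that both Σ_{n≥1} 2^{−2n}/p_n < ∞ and Σ_{n≥1} n · 2^{dn} · p_n < ∞. (Consequently, when the level-difference second moments decay like 2^{−2n}, as for piecewise linear finite elements, and the level-n cost grows like n·2^{dn}, no randomization distribution yields a randomized multilevel estimator with both finite variance and finite expected computational cost in dimension d ≥ 2.) -/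
/-- In dimension `d ≥ 2`, no randomization distribution `(p n)` can make the
randomized multilevel estimator based on piecewise linear finite elements have
both finite variance (`∑_{n≥1} 2^{-2n}/p n < ∞`) and finite expected cost
(`∑_{n≥1} n · 2^{dn} · p n < ∞`). -/
theorem no_distribution_linear_fem (d : ℕ) (hd : 2 ≤ d) :
    ¬ ∃ p : ℕ → ℝ,
        (∀ n : ℕ, 1 ≤ n → 0 < p n) ∧
        (Summable fun n : ℕ => (2 : ℝ) ^ (-(2 * ((n : ℝ) + 1))) / p (n + 1)) ∧
        (Summable fun n : ℕ => ((n : ℝ) + 1) * (2 : ℝ) ^ (d * (n + 1)) * p (n + 1)) := by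
  rintro ⟨p, hp, hf, hg⟩
  have h1 : Filter.Tendsto
      (fun n : ℕ => ((2 : ℝ) ^ (-(2 * ((n : ℝ) + 1))) / p (n + 1)) *
        (((n : ℝ) + 1) * (2 : ℝ) ^ (d * (n + 1)) * p (n + 1)))
      Filter.atTop (nhds 0) := by
    have := hf.tendsto_atTop_zero.mul hg.tendsto_atTop_zero
    simpa using this
  have h2 : ∀ n : ℕ, (1 : ℝ) ≤ ((2 : ℝ) ^ (-(2 * ((n : ℝ) + 1))) / p (n + 1)) *
      (((n : ℝ) + 1) * (2 : ℝ) ^ (d * (n + 1)) * p (n + 1)) := by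
    intro n
    have hpn := hp (n + 1) (by omega)
    have hcancel : ((2 : ℝ) ^ (-(2 * ((n : ℝ) + 1))) / p (n + 1)) *
        (((n : ℝ) + 1) * (2 : ℝ) ^ (d * (n + 1)) * p (n + 1)) =
        ((n : ℝ) + 1) * ((2 : ℝ) ^ (-(2 * ((n : ℝ) + 1))) * (2 : ℝ) ^ (d * (n + 1))) := by
      field_simp
    rw [hcancel]
    have key : (1 : ℝ) ≤ (2 : ℝ) ^ (-(2 * ((n : ℝ) + 1))) * (2 : ℝ) ^ (d * (n + 1)) := by
      have heq : (2 : ℝ) ^ (-(2 * ((n : ℝ) + 1))) * (2 : ℝ) ^ (d * (n + 1)) =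
          (2 : ℝ) ^ (((d * (n + 1) : ℕ) : ℝ) - 2 * ((n : ℝ) + 1)) := by
        rw [← Real.rpow_natCast 2 (d * (n + 1)), ← Real.rpow_add (by norm_num)]
        ring_nf
      rw [heq]
      apply Real.one_le_rpow (by norm_num)
      have hdc : (2 : ℝ) ≤ (d : ℝ) := by exact_mod_cast hd
      have : (2 * ((n : ℝ) + 1)) ≤ ((d * (n + 1) : ℕ) : ℝ) := by
        push_cast
        nlinarith [Nat.cast_nonneg (α := ℝ) n]
      linarith
    nlinarith [key, (show (0 : ℝ) ≤ (n : ℝ) by positivity)]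
  have : (1 : ℝ) ≤ 0 := ge_of_tendsto' h1 h2
  linarith
end
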